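/- Let α > 0 and consider the scaled one-choice optimal stopping values W¹_n = n^{1/α} V¹_n for i.i.d. random variables with distribution function x^α on [0,1], where V¹_{n+1} = E[X ∧ V¹_n] = α∫₀^{V¹_n} x^α dx + (1 − (V¹_n)^α)V¹_n and V¹_1 = E[X]. Then lim_{n→∞} W¹_n = (1 + 1/α)^{1/α}, equivalently lim_{n→∞} n·(V¹_n)^α = 1 + 1/α. -/

import Mathlib

open Filter Finset

theorem stmt19 (α : ℝ) (hα : 0 < α) (V : ℕ → ℝ)
    (hV1 : V 1 = α / (α + 1))
    (hVrec : ∀ n : ℕ, 1 ≤ n →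
      V (n + 1) = α * (∫ x in (0:ℝ)..(V n), x ^ α) + (1 - (V n) ^ α) * V n) :
    Filter.Tendsto (fun n : ℕ => (n : ℝ) ^ (1 / α) * V n) Filter.atTop
        (nhds ((1 + 1 / α) ^ (1 / α))) ∧
      Filter.Tendsto (fun n : ℕ => (n : ℝ) * (V n) ^ α) Filter.atTop
        (nhds (1 + 1 / α)) := by
  have hα1 : (0:ℝ) < α + 1 := by linarith
  set W : ℕ → ℝ := fun n => V (n + 1) with hWdef
  -- step 1: positivity and bound
  have key : ∀ n, 0 < W n ∧ W n < 1 := by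
    intro n
    induction n with
    | zero =>
      simp only [hWdef, hV1]
      constructor
      · positivity
      · rw [div_lt_one hα1]; linarith
    | succ n ih =>
      obtain ⟨h0, h1⟩ := ih
      have hrec := hVrec (n + 1) (Nat.le_add_left 1 n)
      have hint : (∫ x in (0:ℝ)..(W n), x ^ α) = (W n) ^ (α + 1) / (α + 1) := by
        rw [integral_rpow (Or.inl (by linarith)), Real.zero_rpow (by positivity)]
        ring
      have hpow : (W n) ^ (α + 1) = (W n) ^ α * W n := Real.rpow_add_one h0.ne' α
      have hform : W (n + 1) = W n * (1 - (W n) ^ α / (α + 1)) := by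
        show V (n + 1 + 1) = _
        rw [hrec]
        show α * (∫ x in (0:ℝ)..(W n), x ^ α) + (1 - (W n) ^ α) * W n = _
        rw [hint, hpow]
        field_simp
        ring
      have hWα0 : 0 < (W n) ^ α := Real.rpow_pos_of_pos h0 α
      have hWα1 : (W n) ^ α < 1 := Real.rpow_lt_one h0.le h1 hα
      have hfac : 0 < 1 - (W n) ^ α / (α + 1) := by
        rw [sub_pos, div_lt_one hα1]; linarith
      constructor
      · rw [hform]; positivity
      · rw [hform]
        calc W n * (1 - (W n) ^ α / (α + 1)) < W n * 1 := by
              apply mul_lt_mul_of_pos_left _ h0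
              rw [sub_lt_self_iff]; positivity
          _ < 1 := by rwa [mul_one]
  -- the form of the recursion
  have hform : ∀ n, W (n + 1) = W n * (1 - (W n) ^ α / (α + 1)) := by
    intro n
    obtain ⟨h0, h1⟩ := key n
    have hrec := hVrec (n + 1) (Nat.le_add_left 1 n)
    have hint : (∫ x in (0:ℝ)..(W n), x ^ α) = (W n) ^ (α + 1) / (α + 1) := by
      rw [integral_rpow (Or.inl (by linarith)), Real.zero_rpow (by positivity)]
      ring
    have hpow : (W n) ^ (α + 1) = (W n) ^ α * W n := Real.rpow_add_one h0.ne' α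
    show V (n + 1 + 1) = _
    rw [hrec]
    show α * (∫ x in (0:ℝ)..(W n), x ^ α) + (1 - (W n) ^ α) * W n = _
    rw [hint, hpow]
    field_simp
    ring
  set t : ℕ → ℝ := fun n => (W n) ^ α / (α + 1) with htdef
  have htpos : ∀ n, 0 < t n := fun n => by
    have := (key n).1
    simp only [htdef]
    positivity
  have htlt : ∀ n, t n < 1 := fun n => by
    have h1 : (W n) ^ α < 1 := Real.rpow_lt_one (key n).1.le (key n).2 hα
    simp only [htdef]
    rw [div_lt_one hα1]; linarith
  -- W is antitone
  have hanti : Antitone W := by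
    apply antitone_nat_of_succ_le
    intro n
    rw [hform n]
    have h0 := (key n).1
    calc W n * (1 - t n) ≤ W n * 1 := by
          apply mul_le_mul_of_nonneg_left _ h0.le
          linarith [htpos n]
      _ = W n := mul_one _
  -- W tends to 0
  have hW0 : Tendsto W atTop (nhds 0) := by
    have hbdd : BddBelow (Set.range W) := ⟨0, fun x ⟨n, hn⟩ => hn ▸ (key n).1.le⟩
    have hlim := tendsto_atTop_ciInf hanti hbdd
    set L := ⨅ n, W n with hLdef
    have hL0 : 0 ≤ L := le_ciInf fun n => (key n).1.le
    -- pass to limit in recursion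
    have h2 : Tendsto (fun n => W (n + 1)) atTop (nhds L) :=
      (Filter.tendsto_add_atTop_iff_nat 1).2 hlim
    have hcont : ContinuousAt (fun x : ℝ => x ^ α) L :=
      Real.continuousAt_rpow_const L α (Or.inr hα.le)
    have h3 : Tendsto (fun n => W n * (1 - (W n) ^ α / (α + 1))) atTop
        (nhds (L * (1 - L ^ α / (α + 1)))) :=
      hlim.mul ((tendsto_const_nhds.sub (((hcont.tendsto.comp hlim)).div_const _)))
    have heq : L = L * (1 - L ^ α / (α + 1)) := by
      refine tendsto_nhds_unique h2 ?_
      exact h3.congr fun n => (hform n).symm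
    have hLα : L * L ^ α = 0 := by
      have h5 : L * (1 - L ^ α / (α + 1)) * (α + 1) = L * (α + 1) - L * L ^ α := by
        field_simp
      have h6 : L * (α + 1) = L * (1 - L ^ α / (α + 1)) * (α + 1) := by rw [← heq]
      linarith
    have : L = 0 := by
      rcases mul_eq_zero.1 hLα with h | h
      · exact h
      · exact ((Real.rpow_eq_zero hL0 hα.ne').1 h)
    rwa [this] at hlim
  -- t tends to 0
  have ht0 : Tendsto t atTop (nhds 0) := by
    have : Tendsto (fun n => (W n) ^ α) atTop (nhds 0) := by
      have := hW0.rpow_const (Or.inr hα.le)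
      rwa [Real.zero_rpow hα.ne'] at this
    have h := this.div_const (α + 1)
    rwa [zero_div] at h
  -- derivative fact
  have hderiv : HasDerivAt (fun s : ℝ => (1 - s) ^ (-α)) α 0 := by
    have h1 : HasDerivAt (fun s : ℝ => 1 - s) (-1) 0 := (hasDerivAt_id 0).const_sub 1
    have h2 : HasDerivAt (fun x : ℝ => x ^ (-α)) ((-α) * (1:ℝ) ^ (-α - 1)) ((fun s : ℝ => 1 - s) 0) := by
      simpa using Real.hasDerivAt_rpow_const (x := (1:ℝ)) (p := -α) (Or.inl one_ne_zero)
    have h3 : HasDerivAt (fun s : ℝ => (1 - s) ^ (-α)) ((-α) * (1:ℝ) ^ (-α - 1) * (-1)) 0 :=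
      h2.comp 0 h1
    have hv : (-α) * (1:ℝ) ^ (-α - 1) * (-1) = α := by rw [Real.one_rpow]; ring
    rwa [hv] at h3
  have hslope : Tendsto (fun n => ((1 - t n) ^ (-α) - 1) / t n) atTop (nhds α) := by
    rw [hasDerivAt_iff_tendsto_slope] at hderiv
    have htn : Tendsto t atTop (nhdsWithin 0 {0}ᶜ) := by
      rw [tendsto_nhdsWithin_iff]
      exact ⟨ht0, Eventually.of_forall fun n => (htpos n).ne'⟩
    have := hderiv.comp htn
    refine this.congr fun n => ?_
    simp [slope_def_field, Real.one_rpow]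
  -- u_n = W_n ^ (-α)
  set u : ℕ → ℝ := fun n => (W n) ^ (-α) with hudef
  have hu_diff : ∀ n, u (n + 1) - u n = ((1 - t n) ^ (-α) - 1) / t n * (1 / (α + 1)) := by
    intro n
    have h0 := (key n).1
    have h1t : (0:ℝ) < 1 - t n := by linarith [htlt n]
    have hmul : u (n + 1) = u n * (1 - t n) ^ (-α) := by
      simp only [hudef]
      rw [hform n]
      exact Real.mul_rpow h0.le h1t.le
    rw [hmul]
    have huval : u n = ((W n) ^ α)⁻¹ := Real.rpow_neg h0.le α
    have htval : t n * (α + 1) = (W n) ^ α := by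
      simp only [htdef]; field_simp
    have hWα0 : (0:ℝ) < (W n) ^ α := Real.rpow_pos_of_pos h0 α
    rw [huval]
    rw [← htval]
    field_simp
  have hdiff_lim : Tendsto (fun n => u (n + 1) - u n) atTop (nhds (α / (α + 1))) := by
    have := hslope.mul_const (1 / (α + 1))
    have heq : α * (1 / (α + 1)) = α / (α + 1) := by ring
    rw [heq] at this
    exact this.congr fun n => (hu_diff n).symm
  -- Cesàro
  have hcesaro := hdiff_lim.cesaro
  have hsum : ∀ n, ∑ i ∈ range n, (u (i + 1) - u i) = u n - u 0 :=
    fun n => Finset.sum_range_sub u n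
  have hc2 : Tendsto (fun n : ℕ => (n:ℝ)⁻¹ * (u n - u 0)) atTop (nhds (α / (α + 1))) :=
    hcesaro.congr fun n => by rw [hsum n]
  have hc3 : Tendsto (fun n : ℕ => (n:ℝ)⁻¹ * u n) atTop (nhds (α / (α + 1))) := by
    have hz : Tendsto (fun n : ℕ => (n:ℝ)⁻¹ * u 0) atTop (nhds 0) := by
      have := (tendsto_inv_atTop_nhds_zero_nat (𝕜 := ℝ)).mul_const (u 0)
      rwa [zero_mul] at this
    have := hc2.add hz
    rw [add_zero] at this
    exact this.congr fun n => by ring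
  have hcpos : (0:ℝ) < α / (α + 1) := by positivity
  -- invert
  have hinv : Tendsto (fun n : ℕ => ((n:ℝ)⁻¹ * u n)⁻¹) atTop (nhds (1 + 1 / α)) := by
    have := hc3.inv₀ hcpos.ne'
    have heq : (α / (α + 1))⁻¹ = 1 + 1 / α := by
      field_simp
    rwa [heq] at this
  have second : Tendsto (fun n : ℕ => (n:ℝ) * (W n) ^ α) atTop (nhds (1 + 1 / α)) := by
    refine hinv.congr fun n => ?_
    have h0 := (key n).1
    have huval : u n = ((W n) ^ α)⁻¹ := Real.rpow_neg h0.le α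
    rw [huval, mul_inv, inv_inv, inv_inv]
  -- shift back to V
  have hWα0' : Tendsto (fun n => (W n) ^ α) atTop (nhds 0) := by
    have := hW0.rpow_const (Or.inr hα.le)
    rwa [Real.zero_rpow hα.ne'] at this
  have secondV : Tendsto (fun n : ℕ => (n:ℝ) * (V n) ^ α) atTop (nhds (1 + 1 / α)) := by
    rw [← Filter.tendsto_add_atTop_iff_nat 1]
    have := second.add hWα0'
    rw [add_zero] at this
    refine this.congr fun n => ?_
    push_cast
    ring
  refine ⟨?_, secondV⟩
  -- first limit
  have hne : (1:ℝ) + 1 / α ≠ 0 := by positivity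
  have hfirst := secondV.rpow_const (p := 1 / α) (Or.inl hne)
  refine hfirst.congr' ?_
  filter_upwards [eventually_ge_atTop 1] with n hn
  obtain ⟨m, rfl⟩ := Nat.exists_eq_add_of_le hn
  have h0 : 0 < V (1 + m) := by
    rw [add_comm]
    exact (key m).1
  have hn0 : (0:ℝ) ≤ (1 + m : ℕ) := by positivity
  rw [Real.mul_rpow hn0 (Real.rpow_pos_of_pos h0 α).le,
    ← Real.rpow_mul h0.le, mul_one_div_cancel hα.ne', Real.rpow_one]
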